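/- Define Δ_t = σ(ω_t − ω_{t−1}) componentwise, where σ is the saturated linear activation. Then for 1 ≤ t ≤ n and every k: Δ_{t,k} > 0 if s_t = β_k, and Δ_{t,k} = 0 otherwise. -/

import Mathlib

/-- The saturated linear activation function on ℚ. -/
def satq (x : ℚ) : ℚ := if x < 0 then 0 else if x ≤ 1 then x else 1

/-- `omegaVec s t` is the vector of empirical symbol frequencies of `s₀,…,s_t`. -/
def omegaVec {m : ℕ} (s : ℕ → Fin m) (t : ℕ) : Fin m → ℚ :=
  fun k => (∑ j ∈ Finset.range (t + 1), if s j = k then (1 : ℚ) else 0) / (t + 1)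

lemma satq_pos {x : ℚ} (hx : 0 < x) : 0 < satq x := by
  unfold satq
  split_ifs with h1 h2 <;> [linarith; exact hx; norm_num]

lemma satq_nonpos {x : ℚ} (hx : x ≤ 0) : satq x = 0 := by
  unfold satq
  split_ifs with h1 h2 <;> [rfl; linarith; linarith]

/-- With `Δ_t = σ(ω_t − ω_{t−1})` componentwise, for `1 ≤ t ≤ n` and every `k`:
`Δ_{t,k} > 0` if `s_t = β_k`, and `Δ_{t,k} = 0` otherwise
(where `s₀ = #` occurs only at position 0). -/
theorem Delta_pos_iff {m n : ℕ} (s : ℕ → Fin m) (hash : Fin m)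
    (hs0 : s 0 = hash) (hne : ∀ j, 1 ≤ j → j ≤ n → s j ≠ hash)
    (t : ℕ) (ht1 : 1 ≤ t) (htn : t ≤ n) (k : Fin m) :
    (s t = k → 0 < satq (omegaVec s t k - omegaVec s (t - 1) k)) ∧
    (s t ≠ k → satq (omegaVec s t k - omegaVec s (t - 1) k) = 0) := by
  have htm1 : t - 1 + 1 = t := Nat.succ_pred_eq_of_pos ht1
  set c : ℚ := ∑ j ∈ Finset.range t, if s j = k then (1 : ℚ) else 0 with hc
  have htQ : (0 : ℚ) < (t : ℚ) := by exact_mod_cast ht1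
  have hc0 : 0 ≤ c := Finset.sum_nonneg (fun j _ => by positivity)
  have hcle : s t = k → c ≤ (t : ℚ) - 1 := by
    intro hk
    have hkh : k ≠ hash := fun h => hne t ht1 htn (hk.trans h)
    have h1 : c ≤ ∑ j ∈ Finset.range t, (1 - if j = 0 then (1:ℚ) else 0) := by
      rw [hc]
      apply Finset.sum_le_sum
      intro j _
      by_cases hj : j = 0
      · subst hj
        rw [hs0, if_neg (fun h => hkh h.symm), if_pos rfl]; norm_num
      · rw [if_neg hj]
        split_ifs <;> norm_num
    have h2 : ∑ j ∈ Finset.range t, (1 - if j = 0 then (1:ℚ) else 0) = (t : ℚ) - 1 := by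
      rw [Finset.sum_sub_distrib, Finset.sum_const, Finset.sum_ite_eq' (Finset.range t) 0
        (fun _ => (1:ℚ)), if_pos (Finset.mem_range.mpr ht1)]
      simp
    linarith [h1, h2]
  have hωt : omegaVec s t k
      = (c + (if s t = k then (1:ℚ) else 0)) / ((t : ℚ) + 1) := by
    unfold omegaVec
    rw [Finset.sum_range_succ, ← hc]
  have hω1 : omegaVec s (t - 1) k = c / (t : ℚ) := by
    unfold omegaVec
    rw [htm1, ← hc]
    congr 1
    rw [Nat.cast_sub ht1]
    push_cast
    ring
  clear_value c
  have htQ1 : ((t : ℚ) + 1) ≠ 0 := by positivity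
  have htQ0 : (t : ℚ) ≠ 0 := ne_of_gt htQ
  constructor
  · intro hk
    have hcle := hcle hk
    have hdiff : omegaVec s t k - omegaVec s (t-1) k = ((t:ℚ) - c) / ((t:ℚ) * ((t:ℚ)+1)) := by
      rw [hωt, hω1, if_pos hk]
      field_simp
      ring
    rw [hdiff]
    exact satq_pos (div_pos (by linarith) (by positivity))
  · intro hk
    have hdiff : omegaVec s t k - omegaVec s (t-1) k = -c / ((t:ℚ) * ((t:ℚ)+1)) := by
      rw [hωt, hω1, if_neg hk]
      field_simp
      ring
    rw [hdiff]
    exact satq_nonpos (div_nonpos_of_nonpos_of_nonneg (by linarith) (by positivity))
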